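/- With notation as above, the line bundle O(a₁,...,a_s) on P^{n₁}×⋯×P^{n_s} (all n_i ≥ 1) is 0-regular — meaning K_t(a₁+k₁,...,a_s+k_s) = 0 for all t ≥ 1 and all (k₁,...,k_s) with k₁+⋯+k_s = -t and -n_j ≤ k_j ≤ 0 — if and only if a_i ≥ 0 for all i = 1,...,s. -/

import Mathlib

open Finset

/-- dim H^i(ℙ^n, O(d)) -/
def hP (n i : ℕ) (d : ℤ) : ℕ :=
  if i = 0 ∧ 0 ≤ d then ((n : ℤ) + d).toNat.choose n
  else if i = n ∧ 1 ≤ n ∧ d ≤ -(n : ℤ) - 1 then (-d - 1).toNat.choose n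
  else 0

/-- Künneth dimension of H^t(ℙ^{n 0} × ⋯ × ℙ^{n (s-1)}, O(b 0, …, b (s-1))) -/
def KD (s : ℕ) (n : Fin s → ℕ) (t : ℕ) (b : Fin s → ℤ) : ℕ :=
  ∑ f ∈ (Fintype.piFinset fun _ : Fin s => Finset.range (t + 1)).filter
      (fun f => ∑ i, f i = t), ∏ i, hP (n i) (f i) (b i)

lemma hP_ne_zero_cases {n i : ℕ} {d : ℤ} (h : hP n i d ≠ 0) :
    (i = 0 ∧ 0 ≤ d) ∨ (i = n ∧ 1 ≤ n ∧ d ≤ -(n : ℤ) - 1) := by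
  unfold hP at h
  split_ifs at h with h1 h2
  · exact Or.inl h1
  · exact Or.inr h2
  · exact absurd rfl h

/-- O(a₁,…,a_s) is 0-regular iff all aᵢ ≥ 0. -/
theorem line_bundle_zero_regular_iff (s : ℕ) (n : Fin s → ℕ) (hn : ∀ i, 1 ≤ n i)
    (a : Fin s → ℤ) :
    (∀ (t : ℕ) (k : Fin s → ℤ), 1 ≤ t → (∑ i, k i) = -(t : ℤ) →
        (∀ j, -(n j : ℤ) ≤ k j ∧ k j ≤ 0) → KD s n t (fun i => a i + k i) = 0) ↔
      ∀ i, 0 ≤ a i := by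
  constructor
  · intro h
    by_contra hc
    push_neg at hc
    obtain ⟨j, hj⟩ := hc
    set t : ℕ := ∑ i, if a i < 0 then n i else 0 with ht_def
    set k : Fin s → ℤ := fun i => if a i < 0 then -(n i : ℤ) else 0 with hk_def
    set f : Fin s → ℕ := fun i => if a i < 0 then n i else 0 with hf_def
    have hle : ∀ i, a i < 0 → n i ≤ t := by
      intro i hi
      have := Finset.single_le_sum (f := fun i => if a i < 0 then n i else 0)
        (fun i _ => Nat.zero_le _) (Finset.mem_univ i)
      simpa [hi] using this
    have ht1 : 1 ≤ t := le_trans (hn j) (hle j hj)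
    have hsum : (∑ i, k i) = -(t : ℤ) := by
      have : ∀ i, k i = -(((if a i < 0 then n i else 0 : ℕ) : ℤ)) := by
        intro i; simp only [hk_def]; split_ifs <;> simp
      rw [Finset.sum_congr rfl fun i _ => this i, ht_def]
      push_cast
      rw [← Finset.sum_neg_distrib]
      simp [hf_def]
    have hbd : ∀ i, -(n i : ℤ) ≤ k i ∧ k i ≤ 0 := by
      intro i
      simp only [hk_def]
      split_ifs <;> constructor <;> simp
    have h0 := h t k ht1 hsum hbd
    unfold KD at h0
    rw [Finset.sum_eq_zero_iff] at h0
    have hmem : f ∈ (Fintype.piFinset fun _ : Fin s => Finset.range (t + 1)).filter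
        (fun f => ∑ i, f i = t) := by
      rw [Finset.mem_filter]
      constructor
      · rw [Fintype.mem_piFinset]
        intro i
        rw [Finset.mem_range]
        simp only [hf_def]
        split_ifs with hi
        · exact Nat.lt_succ_of_le (hle i hi)
        · omega
      · rfl
    have := h0 f hmem
    rw [Finset.prod_eq_zero_iff] at this
    obtain ⟨i, _, hzero⟩ := this
    simp only [hf_def, hk_def] at hzero
    by_cases hi : a i < 0
    · rw [if_pos hi, if_pos hi] at hzero
      unfold hP at hzero
      rw [if_neg (by have := hn i; omega), if_pos ⟨rfl, hn i, by omega⟩] at hzero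
      exact absurd hzero (Nat.choose_pos (by omega)).ne'
    · rw [if_neg hi, if_neg hi] at hzero
      unfold hP at hzero
      rw [if_pos ⟨rfl, by omega⟩] at hzero
      exact absurd hzero (Nat.choose_pos (by omega)).ne'
  · intro ha t k ht hsum hk
    unfold KD
    apply Finset.sum_eq_zero
    intro f hf
    rw [Finset.mem_filter] at hf
    by_contra hne
    have hall : ∀ i, f i = 0 := by
      intro i
      have hfi : hP (n i) (f i) (a i + k i) ≠ 0 :=
        Finset.prod_ne_zero_iff.mp hne i (Finset.mem_univ i)
      rcases hP_ne_zero_cases hfi with ⟨h1, _⟩ | ⟨_, _, h3⟩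
      · exact h1
      · have := (hk i).1; have := ha i; omega
    have hz : ∑ i, f i = 0 := Finset.sum_eq_zero fun i _ => hall i
    omega
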